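/- Let u : U → ℝ be uniformly concave with constant −1 on a convex set U ⊆ ℝⁿ (in the sense that ⟨p₂−p₁, x₂−x₁⟩ ≤ −|x₂−x₁|² whenever pᵢ ∈ D⁺u(xᵢ)). Let x ∈ U, θ ∈ Sⁿ⁻¹, and suppose xᵢ ∈ U \ {x}, pᵢ ∈ D⁺u(xᵢ) satisfy xᵢ → x, (xᵢ−x)/|xᵢ−x| → θ, and pᵢ → p ∈ ℝⁿ. If D⁺u is upper semicontinuous at x, then p ∈ epf(D⁺u(x), θ), i.e., ⟨p,θ⟩ ≤ ⟨q,θ⟩ for all q ∈ D⁺u(x). -/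

import Mathlib

open Set Filter Topology

/-- The superdifferential of `u` at `x`, relative to the set `U`. -/
def DplusOn {n : ℕ} (u : EuclideanSpace ℝ (Fin n) → ℝ) (U : Set (EuclideanSpace ℝ (Fin n)))
    (x : EuclideanSpace ℝ (Fin n)) : Set (EuclideanSpace ℝ (Fin n)) :=
  {p | ∀ ε > 0, ∀ᶠ y in nhdsWithin x U, u y - u x - (inner ℝ p (y - x) : ℝ) ≤ ε * ‖y - x‖}

theorem limit_superdifferential_in_exposed_face {n : ℕ}
    (U : Set (EuclideanSpace ℝ (Fin n))) (hU : Convex ℝ U)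
    (u : EuclideanSpace ℝ (Fin n) → ℝ)
    (hconc : ∀ x₁ ∈ U, ∀ x₂ ∈ U, ∀ p₁ ∈ DplusOn u U x₁, ∀ p₂ ∈ DplusOn u U x₂,
      (inner ℝ (p₂ - p₁) (x₂ - x₁) : ℝ) ≤ -‖x₂ - x₁‖ ^ 2)
    -- upper semicontinuity of `y ↦ D⁺u(y)` at `x`: limits of superdifferentials at
    -- nearby points lie in `D⁺u(x)`
    (husc : ∀ (y q : ℕ → EuclideanSpace ℝ (Fin n)) (z l : EuclideanSpace ℝ (Fin n)),
      (∀ i, y i ∈ U) → (∀ i, q i ∈ DplusOn u U (y i)) →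
      Tendsto y atTop (nhds z) → Tendsto q atTop (nhds l) → z ∈ U → l ∈ DplusOn u U z)
    (x : EuclideanSpace ℝ (Fin n)) (hx : x ∈ U)
    (θ : EuclideanSpace ℝ (Fin n)) (hθ : ‖θ‖ = 1)
    (xi pi : ℕ → EuclideanSpace ℝ (Fin n))
    (hxi : ∀ i, xi i ∈ U \ {x}) (hpi : ∀ i, pi i ∈ DplusOn u U (xi i))
    (p : EuclideanSpace ℝ (Fin n))
    (hlim₁ : Tendsto xi atTop (nhds x))
    (hlim₂ : Tendsto (fun i => ‖xi i - x‖⁻¹ • (xi i - x)) atTop (nhds θ))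
    (hlim₃ : Tendsto pi atTop (nhds p)) :
    p ∈ DplusOn u U x ∧ ∀ q ∈ DplusOn u U x, (inner ℝ p θ : ℝ) ≤ (inner ℝ q θ : ℝ) := by
  constructor
  · exact husc xi pi x p (fun i => (hxi i).1) hpi hlim₁ hlim₃ hx
  · intro q hq
    have key : ∀ i, (inner ℝ (pi i - q) (‖xi i - x‖⁻¹ • (xi i - x)) : ℝ) ≤ 0 := by
      intro i
      have hne : xi i ≠ x := (hxi i).2
      have hnorm : (0:ℝ) < ‖xi i - x‖ := by
        rw [norm_pos_iff]; exact sub_ne_zero.mpr hne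
      have h := hconc x hx (xi i) (hxi i).1 q hq (pi i) (hpi i)
      rw [real_inner_smul_right]
      have : (inner ℝ (pi i - q) (xi i - x) : ℝ) ≤ 0 := by
        refine h.trans ?_
        simp [sq_nonneg]
      exact mul_nonpos_of_nonneg_of_nonpos (inv_nonneg.mpr hnorm.le) this
    have hlim : Tendsto (fun i => (inner ℝ (pi i - q) (‖xi i - x‖⁻¹ • (xi i - x)) : ℝ))
        atTop (nhds (inner ℝ (p - q) θ : ℝ)) :=
      Tendsto.inner (hlim₃.sub tendsto_const_nhds) hlim₂
    have : (inner ℝ (p - q) θ : ℝ) ≤ 0 := le_of_tendsto hlim (Eventually.of_forall key)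
    rw [inner_sub_left] at this
    linarith
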